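/- (Theorem 3.6.) Let k ≥ 3 and m ≥ 2 be integers, n = m(k − 1) + 1, and write m − 1 = 3a + r with a ≥ 0 and r ∈ {0, 1, 2}. Let (d₁, …, dₙ) be any n-tuple of integers with 1 ≤ dᵢ ≤ 4 for all i and Σᵢ dᵢ = km, set δᵢ = dᵢ(k − 1), and I_δ = log₂(k(k−1)m) − (1/(k(k−1)m))·Σᵢ δᵢ·log₂ δᵢ. Then log₂(k(k−1)m) − (1/(k(k−1)m))·[a(4k − 4)·log₂(4k − 4) + (r + 1)(k − 1)·log₂((r + 1)(k − 1)) + (n − a − 1)(k − 1)·log₂(k − 1)] ≤ I_δ ≤ log₂(k(k−1)m) − (1/(k(k−1)m))·[(m − 1)(2k − 2)·log₂(2k − 2) + (n − m + 1)(k − 1)·log₂(k − 1)], where the first equality holds if and only if (d₁, …, dₙ) is a permutation of the tuple with a entries equal to 4, one entry equal to r + 1 and n − a − 1 entries equal to 1, and the second equality holds if and only if (d₁, …, dₙ) is a permutation of the tuple with m − 1 entries equal to 2 and n − m + 1 entries equal to 1. -/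

import Mathlib

open Finset

private lemma logb23_gt : (4:ℝ)/3 < Real.logb 2 3 := by
  rw [Real.logb, lt_div_iff₀ (Real.log_pos one_lt_two), div_mul_eq_mul_div,
    div_lt_iff₀ (by norm_num : (0:ℝ) < 3)]
  have h : Real.log 16 < Real.log 27 := Real.log_lt_log (by norm_num) (by norm_num)
  have h16 : Real.log 16 = 4 * Real.log 2 := by
    rw [show (16:ℝ) = 2^4 by norm_num, Real.log_pow]; push_cast; ring
  have h27 : Real.log 27 = 3 * Real.log 3 := by
    rw [show (27:ℝ) = 3^3 by norm_num, Real.log_pow]; push_cast; ring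
  nlinarith

private lemma logb23_lt : Real.logb 2 3 < (5:ℝ)/3 := by
  rw [Real.logb, div_lt_iff₀ (Real.log_pos one_lt_two), div_mul_eq_mul_div,
    lt_div_iff₀ (by norm_num : (0:ℝ) < 3)]
  have h : Real.log 27 < Real.log 32 := Real.log_lt_log (by norm_num) (by norm_num)
  have h32 : Real.log 32 = 5 * Real.log 2 := by
    rw [show (32:ℝ) = 2^5 by norm_num, Real.log_pow]; push_cast; ring
  have h27 : Real.log 27 = 3 * Real.log 3 := by
    rw [show (27:ℝ) = 3^3 by norm_num, Real.log_pow]; push_cast; ring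
  nlinarith

private lemma card_filter_perm {n : ℕ} (σ : Equiv.Perm (Fin n)) (p : Fin n → Prop)
    [DecidablePred p] :
    (univ.filter fun i => p (σ i)).card = (univ.filter p).card :=
  Finset.card_bij (fun i _ => σ i) (by simp) (fun a _ b _ h => σ.injective h)
    (fun b hb => ⟨σ.symm b, by simpa using hb, by simp⟩)

private lemma count_le_sum {n : ℕ} (h : Fin n → ℕ) (a : ℕ) :
    (univ.filter fun i => h i ≤ a).card
      = ∑ j ∈ range (a+1), (univ.filter fun i => h i = j).card := by
  rw [Finset.card_eq_sum_card_fiberwise (f := h) (t := range (a+1))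
    (fun x hx => by simpa [Nat.lt_succ_iff] using (mem_filter.1 hx).2)]
  refine Finset.sum_congr rfl fun j hj => ?_
  congr 1
  rw [filter_filter]
  refine filter_congr fun i _ => ?_
  simp only [mem_range, Nat.lt_succ_iff] at hj
  constructor
  · exact fun h' => h'.2
  · exact fun h' => ⟨h' ▸ hj, h'⟩

private lemma monotone_eq_of_counts {n : ℕ} {h1 h2 : Fin n → ℕ} (m1 : Monotone h1)
    (m2 : Monotone h2)
    (hc : ∀ j, (univ.filter fun i => h1 i = j).card = (univ.filter fun i => h2 i = j).card) :
    h1 = h2 := by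
  have hcard : ∀ a : ℕ, Fintype.card {i // h1 i ≤ a} = Fintype.card {i // h2 i ≤ a} := by
    intro a
    rw [Fintype.card_subtype, Fintype.card_subtype, count_le_sum, count_le_sum]
    exact Finset.sum_congr rfl fun j _ => hc j
  funext j
  have key : ∀ a, h1 j ≤ a ↔ h2 j ≤ a := fun a => by
    rw [← Tuple.lt_card_le_iff_apply_le_of_monotone (f := h1) (a := a) (j := j) m1,
        ← Tuple.lt_card_le_iff_apply_le_of_monotone (f := h2) (a := a) (j := j) m2,
        ← Fintype.card_subtype, ← Fintype.card_subtype, hcard a]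
  exact le_antisymm ((key (h2 j)).2 le_rfl) ((key (h1 j)).1 le_rfl)

private lemma exists_perm_iff_counts {n : ℕ} (f g : Fin n → ℕ) :
    (∃ σ : Equiv.Perm (Fin n), ∀ i, f i = g (σ i)) ↔
      ∀ j, (univ.filter fun i => f i = j).card = (univ.filter fun i => g i = j).card := by
  constructor
  · rintro ⟨σ, hσ⟩ j
    have : (univ.filter fun i => f i = j) = (univ.filter fun i => g (σ i) = j) :=
      filter_congr fun i _ => by rw [hσ i]
    rw [this, card_filter_perm σ (fun i => g i = j)]
  · intro hc
    have hfs := Tuple.monotone_sort f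
    have hgs := Tuple.monotone_sort g
    have hcf : ∀ j, (univ.filter fun i => (f ∘ Tuple.sort f) i = j).card
        = (univ.filter fun i => (g ∘ Tuple.sort g) i = j).card := by
      intro j
      simp only [Function.comp_apply]
      rw [card_filter_perm (Tuple.sort f) (fun i => f i = j),
          card_filter_perm (Tuple.sort g) (fun i => g i = j)]
      exact hc j
    have heq : f ∘ Tuple.sort f = g ∘ Tuple.sort g := monotone_eq_of_counts hfs hgs hcf
    refine ⟨(Tuple.sort f).symm.trans (Tuple.sort g), fun i => ?_⟩
    have := congrFun heq ((Tuple.sort f).symm i)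
    simpa using this

private lemma card_filter_val_lt {n b : ℕ} (hb : b ≤ n) :
    (univ.filter fun i : Fin n => (i:ℕ) < b).card = b := by
  rw [← Fintype.card_subtype]
  have e : {i : Fin n // (i:ℕ) < b} ≃ Fin b :=
    { toFun := fun x => ⟨x.1, x.2⟩
      invFun := fun j => ⟨⟨j.1, lt_of_lt_of_le j.2 hb⟩, j.2⟩
      left_inv := fun x => by ext; rfl
      right_inv := fun j => by ext; rfl }
  rw [Fintype.card_congr e, Fintype.card_fin]

private lemma card_filter_val_eq {n b : ℕ} (hb : b < n) :
    (univ.filter fun i : Fin n => (i:ℕ) = b).card = 1 := by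
  have : (univ.filter fun i : Fin n => (i:ℕ) = b) = {⟨b, hb⟩} := by
    ext i; simp [Fin.ext_iff]
  rw [this, card_singleton]

private lemma card_filter_val_not_lt {n b : ℕ} (hb : b ≤ n) :
    (univ.filter fun i : Fin n => ¬ (i:ℕ) < b).card = n - b := by
  have h := Finset.card_filter_add_card_filter_not (s := (univ : Finset (Fin n)))
    (p := fun i : Fin n => (i:ℕ) < b)
  rw [card_filter_val_lt hb, card_univ, Fintype.card_fin] at h
  omega

private lemma fiber_total {n : ℕ} (d : Fin n → ℕ) (hd : ∀ i, 1 ≤ d i ∧ d i ≤ 4) :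
    (univ.filter fun i => d i = 1).card + (univ.filter fun i => d i = 2).card
      + (univ.filter fun i => d i = 3).card + (univ.filter fun i => d i = 4).card = n := by
  have h := Finset.card_eq_sum_card_fiberwise (f := d) (s := univ) (t := Finset.Icc 1 4)
    (fun i _ => Finset.mem_Icc.2 (hd i))
  rw [card_univ, Fintype.card_fin] at h
  rw [show (Finset.Icc 1 4 : Finset ℕ) = {1,2,3,4} by rfl] at h
  simp [Finset.sum_insert, Finset.mem_insert] at h
  omega

private lemma fiber_sum {n : ℕ} (d : Fin n → ℕ) (hd : ∀ i, 1 ≤ d i ∧ d i ≤ 4)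
    {M : Type*} [AddCommMonoid M] (F : ℕ → M) :
    ∑ i, F (d i) = (univ.filter fun i => d i = 1).card • F 1
      + (univ.filter fun i => d i = 2).card • F 2
      + (univ.filter fun i => d i = 3).card • F 3
      + (univ.filter fun i => d i = 4).card • F 4 := by
  rw [← Finset.sum_fiberwise_of_maps_to (fun i _ => Finset.mem_Icc.2 (hd i)) (fun i => F (d i))]
  have key : ∀ j, (∑ i ∈ univ.filter fun i => d i = j, F (d i))
      = (univ.filter fun i => d i = j).card • F j := by
    intro j
    rw [← Finset.sum_const]
    exact Finset.sum_congr rfl fun i hi => by rw [(Finset.mem_filter.1 hi).2]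
  rw [show (Finset.Icc 1 4 : Finset ℕ) = {1,2,3,4} by rfl]
  rw [Finset.sum_insert (by decide), Finset.sum_insert (by decide),
    Finset.sum_insert (by decide), Finset.sum_singleton]
  rw [key 1, key 2, key 3, key 4]
  abel

private lemma core_max (α β γ : ℝ) (hb1 : 2*α < β) (hb2 : 2*β < γ + α) (he1 : 3*α < γ)
    (he2 : 3*β < 2*γ) (he3 : α + β < γ) :
    ∀ N p q u a r : ℕ, p + q ≤ N → r ≤ 2 → p + 2*q + 3*u = 3*a + r →
    ((p:ℝ)*α + (q:ℝ)*β + (u:ℝ)*γ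
        ≤ (a:ℝ)*γ + (if r = 0 then 0 else if r = 1 then α else β)) ∧
    ((p:ℝ)*α + (q:ℝ)*β + (u:ℝ)*γ
        = (a:ℝ)*γ + (if r = 0 then 0 else if r = 1 then α else β) →
      p = (if r = 1 then 1 else 0) ∧ q = (if r = 2 then 1 else 0) ∧ u = a) := by
  intro N
  induction N with
  | zero =>
    intro p q u a r hle hr heq
    have hp : p = 0 := by omega
    have hq : q = 0 := by omega
    subst hp; subst hq
    have hr0 : r = 0 := by omega
    have hua : u = a := by omega
    subst hr0; subst hua
    simp
  | succ N ih =>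
    intro p q u a r hle hr heq
    by_cases h3p : 3 ≤ p
    · have key := ih (p-3) q (u+1) a r (by omega) hr (by omega)
      have hcast : ((p:ℝ))*α = ((p-3:ℕ):ℝ)*α + 3*α := by
        have : ((p-3:ℕ):ℝ) = (p:ℝ) - 3 := by push_cast [h3p]; ring
        rw [this]; ring
      have hlt : (p:ℝ)*α + (q:ℝ)*β + (u:ℝ)*γ
          < ((p-3:ℕ):ℝ)*α + (q:ℝ)*β + ((u+1:ℕ):ℝ)*γ := by
        push_cast; push_cast at hcast; nlinarith [hcast]
      constructor
      · linarith [key.1]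
      · intro h; exfalso; linarith [key.1]
    · by_cases h3q : 3 ≤ q
      · have key := ih p (q-3) (u+2) a r (by omega) hr (by omega)
        have hlt : (p:ℝ)*α + (q:ℝ)*β + (u:ℝ)*γ
            < (p:ℝ)*α + ((q-3:ℕ):ℝ)*β + ((u+2:ℕ):ℝ)*γ := by
          have : ((q-3:ℕ):ℝ) = (q:ℝ) - 3 := by push_cast [h3q]; ring
          rw [this]; push_cast; nlinarith
        constructor
        · linarith [key.1]
        · intro h; exfalso; linarith [key.1]
      · by_cases hpq : 1 ≤ p ∧ 1 ≤ q
        · have key := ih (p-1) (q-1) (u+1) a r (by omega) hr (by omega)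
          have hlt : (p:ℝ)*α + (q:ℝ)*β + (u:ℝ)*γ
              < ((p-1:ℕ):ℝ)*α + ((q-1:ℕ):ℝ)*β + ((u+1:ℕ):ℝ)*γ := by
            have h1 : ((p-1:ℕ):ℝ) = (p:ℝ) - 1 := by push_cast [hpq.1]; ring
            have h2 : ((q-1:ℕ):ℝ) = (q:ℝ) - 1 := by push_cast [hpq.2]; ring
            rw [h1, h2]; push_cast; nlinarith
          constructor
          · linarith [key.1]
          · intro h; exfalso; linarith [key.1]
        · have hp2 : p ≤ 2 := by omega
          have hq2 : q ≤ 2 := by omega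
          interval_cases p <;> interval_cases q
          · have : r = 0 ∧ u = a := by omega
            obtain ⟨hr0, hua⟩ := this; subst hr0; subst hua; simp
          · have : r = 2 ∧ u = a := by omega
            obtain ⟨hr0, hua⟩ := this; subst hr0; subst hua
            norm_num; linarith
          · have : r = 1 ∧ a = u + 1 := by omega
            obtain ⟨hr0, hua⟩ := this; subst hr0; subst hua
            norm_num; push_cast
            constructor
            · nlinarith
            · intro h; exfalso; nlinarith
          · have : r = 1 ∧ u = a := by omega
            obtain ⟨hr0, hua⟩ := this; subst hr0; subst hua
            norm_num; linarith
          · exact absurd ⟨le_refl 1, le_refl 1⟩ hpq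
          · exact absurd ⟨by omega, by omega⟩ hpq
          · have : r = 2 ∧ u = a := by omega
            obtain ⟨hr0, hua⟩ := this; subst hr0; subst hua
            norm_num; push_cast
            constructor
            · nlinarith
            · intro h; exfalso; nlinarith
          · exact absurd ⟨by omega, by omega⟩ hpq
          · exact absurd ⟨by omega, by omega⟩ hpq

private lemma counts_thigh {n b : ℕ} (hb : b ≤ n) (d : Fin n → ℕ)
    (hd : ∀ i, 1 ≤ d i ∧ d i ≤ 4) :
    (∃ σ : Equiv.Perm (Fin n), ∀ i, d i = if ((σ i : Fin n) : ℕ) < b then 2 else 1)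
      ↔ ((univ.filter fun i => d i = 2).card = b ∧
          (univ.filter fun i => d i = 3).card = 0 ∧
          (univ.filter fun i => d i = 4).card = 0) := by
  set t : Fin n → ℕ := fun j => if (j : ℕ) < b then 2 else 1 with ht
  have hteq : (∃ σ : Equiv.Perm (Fin n), ∀ i, d i = if ((σ i : Fin n) : ℕ) < b then 2 else 1)
      ↔ ∃ σ : Equiv.Perm (Fin n), ∀ i, d i = t (σ i) := Iff.rfl
  rw [hteq, exists_perm_iff_counts]
  have htd : ∀ i, 1 ≤ t i ∧ t i ≤ 4 := fun i => by simp only [ht]; split_ifs <;> omega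
  have ht2 : (univ.filter fun i => t i = 2).card = b := by
    rw [show (univ.filter fun i => t i = 2) = univ.filter fun i : Fin n => (i:ℕ) < b from
      filter_congr fun i _ => by simp only [ht]; split_ifs <;> omega]
    exact card_filter_val_lt hb
  have ht1 : (univ.filter fun i => t i = 1).card = n - b := by
    rw [show (univ.filter fun i => t i = 1) = univ.filter fun i : Fin n => ¬ (i:ℕ) < b from
      filter_congr fun i _ => by simp only [ht]; split_ifs <;> omega]
    exact card_filter_val_not_lt hb
  have htj : ∀ j, j ≠ 1 → j ≠ 2 → (univ.filter fun i => t i = j).card = 0 := by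
    intro j h1 h2
    rw [Finset.card_eq_zero, Finset.filter_eq_empty_iff]
    intro i _
    simp only [ht]; split_ifs <;> omega
  have hdj : ∀ j, j = 0 ∨ 5 ≤ j → (univ.filter fun i => d i = j).card = 0 := by
    intro j hj
    rw [Finset.card_eq_zero, Finset.filter_eq_empty_iff]
    intro i _
    have := hd i; omega
  constructor
  · intro hc
    refine ⟨by rw [hc 2, ht2], by rw [hc 3]; exact htj 3 (by omega) (by omega),
      by rw [hc 4]; exact htj 4 (by omega) (by omega)⟩
  · rintro ⟨h2, h3, h4⟩ j
    have htot := fiber_total d hd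
    have httot := fiber_total t htd
    match j with
    | 0 => rw [hdj 0 (by omega), htj 0 (by omega) (by omega)]
    | 1 => rw [ht1]; omega
    | 2 => rw [h2, ht2]
    | 3 => rw [h3, htj 3 (by omega) (by omega)]
    | 4 => rw [h4, htj 4 (by omega) (by omega)]
    | (j+5) => rw [hdj (j+5) (by omega), htj (j+5) (by omega) (by omega)]

private lemma counts_tlow {n a r : ℕ} (hr : r ≤ 2) (han : a < n) (d : Fin n → ℕ)
    (hd : ∀ i, 1 ≤ d i ∧ d i ≤ 4) :
    (∃ σ : Equiv.Perm (Fin n), ∀ i,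
        d i = if ((σ i : Fin n) : ℕ) < a then 4 else if ((σ i : Fin n) : ℕ) = a then r + 1 else 1)
      ↔ ((univ.filter fun i => d i = 2).card = (if r = 1 then 1 else 0) ∧
          (univ.filter fun i => d i = 3).card = (if r = 2 then 1 else 0) ∧
          (univ.filter fun i => d i = 4).card = a) := by
  set t : Fin n → ℕ := fun j => if (j : ℕ) < a then 4 else if (j : ℕ) = a then r + 1 else 1
    with ht
  have hteq : (∃ σ : Equiv.Perm (Fin n), ∀ i,
        d i = if ((σ i : Fin n) : ℕ) < a then 4 else if ((σ i : Fin n) : ℕ) = a then r + 1 else 1)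
      ↔ ∃ σ : Equiv.Perm (Fin n), ∀ i, d i = t (σ i) := Iff.rfl
  rw [hteq, exists_perm_iff_counts]
  have htd : ∀ i, 1 ≤ t i ∧ t i ≤ 4 := fun i => by simp only [ht]; split_ifs <;> omega
  have ht4 : (univ.filter fun i => t i = 4).card = a := by
    rw [show (univ.filter fun i => t i = 4) = univ.filter fun i : Fin n => (i:ℕ) < a from
      filter_congr fun i _ => by simp only [ht]; split_ifs <;> omega]
    exact card_filter_val_lt han.le
  have ht2 : (univ.filter fun i => t i = 2).card = (if r = 1 then 1 else 0) := by
    split_ifs with h1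
    · rw [show (univ.filter fun i => t i = 2) = univ.filter fun i : Fin n => (i:ℕ) = a from
        filter_congr fun i _ => by simp only [ht]; split_ifs <;> omega]
      exact card_filter_val_eq han
    · rw [Finset.card_eq_zero, Finset.filter_eq_empty_iff]
      intro i _; simp only [ht]; split_ifs <;> omega
  have ht3 : (univ.filter fun i => t i = 3).card = (if r = 2 then 1 else 0) := by
    split_ifs with h1
    · rw [show (univ.filter fun i => t i = 3) = univ.filter fun i : Fin n => (i:ℕ) = a from
        filter_congr fun i _ => by simp only [ht]; split_ifs <;> omega]
      exact card_filter_val_eq han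
    · rw [Finset.card_eq_zero, Finset.filter_eq_empty_iff]
      intro i _; simp only [ht]; split_ifs <;> omega
  have ht1 : (univ.filter fun i => t i = 1).card = n - a - (if r = 0 then 0 else 1) := by
    split_ifs with h1
    · rw [show (univ.filter fun i => t i = 1) = univ.filter fun i : Fin n => ¬ (i:ℕ) < a from
        filter_congr fun i _ => by simp only [ht]; split_ifs <;> omega]
      rw [card_filter_val_not_lt han.le]; omega
    · rw [show (univ.filter fun i => t i = 1) = univ.filter fun i : Fin n => ¬ (i:ℕ) < a + 1 from
        filter_congr fun i _ => by simp only [ht]; split_ifs <;> omega]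
      rw [card_filter_val_not_lt (by omega : a + 1 ≤ n)]
      omega
  have htj : ∀ j, j = 0 ∨ 5 ≤ j → (univ.filter fun i => t i = j).card = 0 := by
    intro j hj
    rw [Finset.card_eq_zero, Finset.filter_eq_empty_iff]
    intro i _; simp only [ht]; split_ifs <;> omega
  have hdj : ∀ j, j = 0 ∨ 5 ≤ j → (univ.filter fun i => d i = j).card = 0 := by
    intro j hj
    rw [Finset.card_eq_zero, Finset.filter_eq_empty_iff]
    intro i _; have := hd i; omega
  constructor
  · intro hc
    exact ⟨by rw [hc 2, ht2], by rw [hc 3, ht3], by rw [hc 4, ht4]⟩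
  · rintro ⟨h2, h3, h4⟩ j
    have htot := fiber_total d hd
    have httot := fiber_total t htd
    match j with
    | 0 => rw [hdj 0 (by omega), htj 0 (by omega)]
    | 1 =>
      rw [ht1] at httot ⊢
      rw [ht2] at httot; rw [ht3] at httot; rw [ht4] at httot
      split_ifs at * <;> omega
    | 2 => rw [h2, ht2]
    | 3 => rw [h3, ht3]
    | 4 => rw [h4, ht4]
    | (j+5) => rw [hdj (j+5) (by omega), htj (j+5) (by omega)]

/-- Theorem 3.6: among chemical `k`-uniform hypertree degree sequences
(`n = m(k-1)+1` integers `1 ≤ dᵢ ≤ 4` with `Σ dᵢ = km`, Laplacian degrees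
`δᵢ = dᵢ(k-1)`) with `m - 1 = 3a + r`, `r ∈ {0,1,2}`, the entropy `I_δ` lies between
the value of the extremal chemical hypertree family `T*` and the loose-path value,
with the stated equality characterizations. -/
theorem stmt_14 (k m n a r : ℕ) (hk : 3 ≤ k) (hm : 2 ≤ m) (hn : n = m * (k - 1) + 1)
    (hr : r ≤ 2) (hmar : m - 1 = 3 * a + r)
    (d : Fin n → ℕ) (hd : ∀ i, 1 ≤ d i ∧ d i ≤ 4) (hsum : ∑ i, d i = k * m)
    (δ : Fin n → ℝ) (hδ : ∀ i, δ i = (d i : ℝ) * ((k : ℝ) - 1))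
    (Iδ : ℝ)
    (hI : Iδ = Real.logb 2 ((k : ℝ) * ((k : ℝ) - 1) * (m : ℝ)) -
      (1 / ((k : ℝ) * ((k : ℝ) - 1) * (m : ℝ))) * ∑ i, δ i * Real.logb 2 (δ i))
    (Blow : ℝ)
    (hBlow : Blow = Real.logb 2 ((k : ℝ) * ((k : ℝ) - 1) * (m : ℝ)) -
      (1 / ((k : ℝ) * ((k : ℝ) - 1) * (m : ℝ))) *
        ((a : ℝ) * (4 * (k : ℝ) - 4) * Real.logb 2 (4 * (k : ℝ) - 4) +
          ((r : ℝ) + 1) * ((k : ℝ) - 1) * Real.logb 2 (((r : ℝ) + 1) * ((k : ℝ) - 1)) +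
          ((n : ℝ) - (a : ℝ) - 1) * ((k : ℝ) - 1) * Real.logb 2 ((k : ℝ) - 1)))
    (Bhigh : ℝ)
    (hBhigh : Bhigh = Real.logb 2 ((k : ℝ) * ((k : ℝ) - 1) * (m : ℝ)) -
      (1 / ((k : ℝ) * ((k : ℝ) - 1) * (m : ℝ))) *
        (((m : ℝ) - 1) * (2 * (k : ℝ) - 2) * Real.logb 2 (2 * (k : ℝ) - 2) +
          ((n : ℝ) - (m : ℝ) + 1) * ((k : ℝ) - 1) * Real.logb 2 ((k : ℝ) - 1))) :
    (Blow ≤ Iδ ∧ Iδ ≤ Bhigh) ∧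
    (Iδ = Blow ↔ ∃ σ : Equiv.Perm (Fin n), ∀ i,
      d i = if ((σ i : Fin n) : ℕ) < a then 4 else if ((σ i : Fin n) : ℕ) = a then r + 1 else 1) ∧
    (Iδ = Bhigh ↔ ∃ σ : Equiv.Perm (Fin n), ∀ i,
      d i = if ((σ i : Fin n) : ℕ) < m - 1 then 2 else 1) := by
  have hk3 : (3:ℝ) ≤ (k:ℝ) := by exact_mod_cast hk
  have hm2 : (2:ℝ) ≤ (m:ℝ) := by exact_mod_cast hm
  set c : ℝ := (k:ℝ) - 1 with hcdef
  have hc2 : (2:ℝ) ≤ c := by rw [hcdef]; linarith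
  have hc0 : (0:ℝ) < c := by linarith
  clear_value c
  have hlam1 : (4:ℝ)/3 < Real.logb 2 3 := logb23_gt
  have hlam2 : Real.logb 2 3 < (5:ℝ)/3 := logb23_lt
  have hlgc1 : (1:ℝ) ≤ Real.logb 2 c := by
    have h := Real.logb_le_logb_of_le (one_lt_two) (by norm_num : (0:ℝ) < 2) hc2
    rwa [Real.logb_self_eq_one one_lt_two] at h
  -- counts
  set N1 := (univ.filter fun i => d i = 1).card with hN1
  set N2 := (univ.filter fun i => d i = 2).card with hN2
  set N3 := (univ.filter fun i => d i = 3).card with hN3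
  set N4 := (univ.filter fun i => d i = 4).card with hN4
  clear_value N1 N2 N3 N4
  have htot : N1 + N2 + N3 + N4 = n := by
    have h := fiber_total d hd; rw [← hN1, ← hN2, ← hN3, ← hN4] at h; exact h
  have hwsum : k * m = N1 * 1 + N2 * 2 + N3 * 3 + N4 * 4 := by
    have h : (k*m) = (univ.filter fun i => d i = 1).card * 1
        + (univ.filter fun i => d i = 2).card * 2
        + (univ.filter fun i => d i = 3).card * 3
        + (univ.filter fun i => d i = 4).card * 4 := by
      rw [← hsum]; simpa [smul_eq_mul] using fiber_sum d hd (fun t : ℕ => t)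
    rw [← hN1, ← hN2, ← hN3, ← hN4] at h; exact h
  have h2m : m * 2 ≤ m * (k-1) := Nat.mul_le_mul_left m (by omega)
  have hprod : k * m = m * (k-1) + m := by
    have h1 : (k-1) + 1 = k := by omega
    calc k * m = m * ((k-1)+1) := by rw [h1]; ring
    _ = m * (k-1) + m := by ring
  have heqn : N2 + 2*N3 + 3*N4 = 3*a + r := by omega
  have han : a < n := by omega
  have hbn : m - 1 ≤ n := by omega
  -- logb values
  have hl2 : Real.logb 2 (2*c) = 1 + Real.logb 2 c := by
    rw [Real.logb_mul (by norm_num) (ne_of_gt hc0), Real.logb_self_eq_one one_lt_two]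
  have hl3 : Real.logb 2 (3*c) = Real.logb 2 3 + Real.logb 2 c :=
    Real.logb_mul (by norm_num) (ne_of_gt hc0)
  have hl4 : Real.logb 2 (4*c) = 2 + Real.logb 2 c := by
    rw [Real.logb_mul (by norm_num) (ne_of_gt hc0),
      show (4:ℝ) = 2^(2:ℕ) by norm_num, Real.logb_pow, Real.logb_self_eq_one one_lt_two]
    norm_num
  -- T
  set T := ∑ i, δ i * Real.logb 2 (δ i) with hT0
  clear_value T
  have hTval : T = (N1:ℝ)*(c*Real.logb 2 c) + (N2:ℝ)*(2*c*(1+Real.logb 2 c))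
      + (N3:ℝ)*(3*c*(Real.logb 2 3 + Real.logb 2 c))
      + (N4:ℝ)*(4*c*(2+Real.logb 2 c)) := by
    rw [hT0]
    have hs : ∑ i, δ i * Real.logb 2 (δ i)
        = ∑ i, ((d i : ℝ)*c*Real.logb 2 ((d i : ℝ)*c)) :=
      Finset.sum_congr rfl (fun i _ => by rw [hδ i])
    rw [hs]
    have h := fiber_sum d hd (fun t : ℕ => (t:ℝ)*c*Real.logb 2 ((t:ℝ)*c))
    rw [← hN1, ← hN2, ← hN3, ← hN4] at h
    rw [h]
    simp only [nsmul_eq_mul]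
    push_cast
    rw [show ((1:ℝ)*c) = c by ring, hl2, hl3, hl4]
    try ring
  -- cast identities
  have hN1R : (N1:ℝ) = (n:ℝ) - N2 - N3 - N4 := by
    have h : ((N1:ℕ):ℝ) + N2 + N3 + N4 = (n:ℝ) := by exact_mod_cast htot
    linarith only [h]
  have hm1n : m = N2 + 2*N3 + 3*N4 + 1 := by omega
  have hmR : (m:ℝ) - 1 = (N2:ℝ) + 2*N3 + 3*N4 := by
    rw [hm1n]; push_cast; ring
  -- positivity of S
  have hS : 0 < (k:ℝ)*c*(m:ℝ) := by
    apply mul_pos (mul_pos (by linarith) hc0) (by linarith)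
  have h1S : 0 < 1/((k:ℝ)*c*(m:ℝ)) := one_div_pos.mpr hS
  -- alpha beta gamma
  have hb1 : 2*((2*c*(1+Real.logb 2 c)) - c*Real.logb 2 c)
      < (3*c*(Real.logb 2 3 + Real.logb 2 c)) - c*Real.logb 2 c := by
    nlinarith only [mul_pos hc0 (show (0:ℝ) < 3*Real.logb 2 3 - 4 by linarith only [hlam1])]
  have hb2 : 2*((3*c*(Real.logb 2 3 + Real.logb 2 c)) - c*Real.logb 2 c)
      < ((4*c*(2+Real.logb 2 c)) - c*Real.logb 2 c)
        + ((2*c*(1+Real.logb 2 c)) - c*Real.logb 2 c) := by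
    nlinarith only [mul_pos hc0 (show (0:ℝ) < 10 - 6*Real.logb 2 3 by linarith only [hlam2])]
  have he1 : 3*((2*c*(1+Real.logb 2 c)) - c*Real.logb 2 c)
      < (4*c*(2+Real.logb 2 c)) - c*Real.logb 2 c := by nlinarith only [hc0]
  have he2 : 3*((3*c*(Real.logb 2 3 + Real.logb 2 c)) - c*Real.logb 2 c)
      < 2*((4*c*(2+Real.logb 2 c)) - c*Real.logb 2 c) := by
    nlinarith only [mul_pos hc0 (show (0:ℝ) < 16 - 9*Real.logb 2 3 by linarith only [hlam2])]
  have he3 : ((2*c*(1+Real.logb 2 c)) - c*Real.logb 2 c)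
      + ((3*c*(Real.logb 2 3 + Real.logb 2 c)) - c*Real.logb 2 c)
      < (4*c*(2+Real.logb 2 c)) - c*Real.logb 2 c := by
    nlinarith only [mul_pos hc0 (show (0:ℝ) < 6 - 3*Real.logb 2 3 by linarith only [hlam2])]
  have hcore := core_max ((2*c*(1+Real.logb 2 c)) - c*Real.logb 2 c)
    ((3*c*(Real.logb 2 3 + Real.logb 2 c)) - c*Real.logb 2 c)
    ((4*c*(2+Real.logb 2 c)) - c*Real.logb 2 c)
    hb1 hb2 he1 he2 he3 (N2+N3) N2 N3 N4 a r le_rfl hr heqn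
  -- BL value
  have hBLval : ((a : ℝ) * (4 * (k : ℝ) - 4) * Real.logb 2 (4 * (k : ℝ) - 4) +
          ((r : ℝ) + 1) * c * Real.logb 2 (((r : ℝ) + 1) * c) +
          ((n : ℝ) - (a : ℝ) - 1) * c * Real.logb 2 c)
      = (n:ℝ)*(c*Real.logb 2 c) + (a:ℝ)*((4*c*(2+Real.logb 2 c)) - c*Real.logb 2 c)
        + (if r = 0 then 0 else if r = 1 then (2*c*(1+Real.logb 2 c)) - c*Real.logb 2 c
            else (3*c*(Real.logb 2 3 + Real.logb 2 c)) - c*Real.logb 2 c) := by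
    rw [show 4*(k:ℝ) - 4 = 4*c by rw [hcdef]; ring, hl4]
    interval_cases r
    · norm_num
      ring
    · norm_num
      rw [hl2]
      ring
    · norm_num
      rw [hl3]
      ring
  have hTBL : T - ((a : ℝ) * (4 * (k : ℝ) - 4) * Real.logb 2 (4 * (k : ℝ) - 4) +
          ((r : ℝ) + 1) * c * Real.logb 2 (((r : ℝ) + 1) * c) +
          ((n : ℝ) - (a : ℝ) - 1) * c * Real.logb 2 c)
      = ((N2:ℝ)*((2*c*(1+Real.logb 2 c)) - c*Real.logb 2 c)
          + (N3:ℝ)*((3*c*(Real.logb 2 3 + Real.logb 2 c)) - c*Real.logb 2 c)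
          + (N4:ℝ)*((4*c*(2+Real.logb 2 c)) - c*Real.logb 2 c))
        - ((a:ℝ)*((4*c*(2+Real.logb 2 c)) - c*Real.logb 2 c)
          + (if r = 0 then 0 else if r = 1 then (2*c*(1+Real.logb 2 c)) - c*Real.logb 2 c
              else (3*c*(Real.logb 2 3 + Real.logb 2 c)) - c*Real.logb 2 c)) := by
    rw [hTval, hBLval, hN1R]; ring
  have hUB : T ≤ ((a : ℝ) * (4 * (k : ℝ) - 4) * Real.logb 2 (4 * (k : ℝ) - 4) +
          ((r : ℝ) + 1) * c * Real.logb 2 (((r : ℝ) + 1) * c) +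
          ((n : ℝ) - (a : ℝ) - 1) * c * Real.logb 2 c) := by
    linarith only [hcore.1, hTBL]
  have hUeq : T = ((a : ℝ) * (4 * (k : ℝ) - 4) * Real.logb 2 (4 * (k : ℝ) - 4) +
          ((r : ℝ) + 1) * c * Real.logb 2 (((r : ℝ) + 1) * c) +
          ((n : ℝ) - (a : ℝ) - 1) * c * Real.logb 2 c)
      ↔ (N2 = (if r = 1 then 1 else 0) ∧ N3 = (if r = 2 then 1 else 0) ∧ N4 = a) := by
    constructor
    · intro h
      exact hcore.2 (by linarith only [hTBL, h])
    · rintro ⟨h2', h3', h4'⟩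
      have c2 : (N2:ℝ) = (if r = 1 then (1:ℝ) else 0) := by
        rw [h2']; split_ifs <;> norm_num
      have c3 : (N3:ℝ) = (if r = 2 then (1:ℝ) else 0) := by
        rw [h3']; split_ifs <;> norm_num
      have c4 : (N4:ℝ) = (a:ℝ) := by rw [h4']
      rw [c2, c3, c4] at hTBL
      split_ifs at hTBL <;> first | linarith only [hTBL] | (exfalso; omega)
  -- BH value
  have hBHval : (((m : ℝ) - 1) * (2 * (k : ℝ) - 2) * Real.logb 2 (2 * (k : ℝ) - 2) +
          ((n : ℝ) - (m : ℝ) + 1) * c * Real.logb 2 c)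
      = (n:ℝ)*(c*Real.logb 2 c)
        + ((m:ℝ)-1)*((2*c*(1+Real.logb 2 c)) - c*Real.logb 2 c) := by
    rw [show 2*(k:ℝ) - 2 = 2*c by rw [hcdef]; ring, hl2]; ring
  have hTBH : T - (((m : ℝ) - 1) * (2 * (k : ℝ) - 2) * Real.logb 2 (2 * (k : ℝ) - 2) +
          ((n : ℝ) - (m : ℝ) + 1) * c * Real.logb 2 c)
      = (N3:ℝ)*(((3*c*(Real.logb 2 3 + Real.logb 2 c)) - c*Real.logb 2 c)
            - 2*((2*c*(1+Real.logb 2 c)) - c*Real.logb 2 c))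
        + (N4:ℝ)*(((4*c*(2+Real.logb 2 c)) - c*Real.logb 2 c)
            - 3*((2*c*(1+Real.logb 2 c)) - c*Real.logb 2 c)) := by
    rw [hTval, hBHval, hN1R, hmR]; ring
  have hN3R : (0:ℝ) ≤ (N3:ℝ) := Nat.cast_nonneg N3
  have hN4R : (0:ℝ) ≤ (N4:ℝ) := Nat.cast_nonneg N4
  have hHB : (((m : ℝ) - 1) * (2 * (k : ℝ) - 2) * Real.logb 2 (2 * (k : ℝ) - 2) +
          ((n : ℝ) - (m : ℝ) + 1) * c * Real.logb 2 c) ≤ T := by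
    nlinarith only [hTBH, mul_nonneg hN3R (by linarith only [hb1] :
        (0:ℝ) ≤ ((3*c*(Real.logb 2 3 + Real.logb 2 c)) - c*Real.logb 2 c)
            - 2*((2*c*(1+Real.logb 2 c)) - c*Real.logb 2 c)),
      mul_nonneg hN4R (by linarith only [he1] :
        (0:ℝ) ≤ ((4*c*(2+Real.logb 2 c)) - c*Real.logb 2 c)
            - 3*((2*c*(1+Real.logb 2 c)) - c*Real.logb 2 c))]
  have hHeq : T = (((m : ℝ) - 1) * (2 * (k : ℝ) - 2) * Real.logb 2 (2 * (k : ℝ) - 2) +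
          ((n : ℝ) - (m : ℝ) + 1) * c * Real.logb 2 c) ↔ (N3 = 0 ∧ N4 = 0) := by
    constructor
    · intro h
      constructor
      · by_contra h3
        have : (1:ℝ) ≤ (N3:ℝ) := by exact_mod_cast Nat.one_le_iff_ne_zero.2 h3
        nlinarith only [h, hTBH, this, mul_nonneg hN4R (by linarith only [he1] :
          (0:ℝ) ≤ ((4*c*(2+Real.logb 2 c)) - c*Real.logb 2 c)
              - 3*((2*c*(1+Real.logb 2 c)) - c*Real.logb 2 c)), hb1, he1]
      · by_contra h4
        have : (1:ℝ) ≤ (N4:ℝ) := by exact_mod_cast Nat.one_le_iff_ne_zero.2 h4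
        nlinarith only [h, hTBH, this, mul_nonneg hN3R (by linarith only [hb1] :
          (0:ℝ) ≤ ((3*c*(Real.logb 2 3 + Real.logb 2 c)) - c*Real.logb 2 c)
              - 2*((2*c*(1+Real.logb 2 c)) - c*Real.logb 2 c)), hb1, he1]
    · rintro ⟨h3, h4⟩
      have c3 : (N3:ℝ) = 0 := by exact_mod_cast h3
      have c4 : (N4:ℝ) = 0 := by exact_mod_cast h4
      rw [c3, c4] at hTBH
      linarith only [hTBH]
  -- translate to Iδ
  have hIBL : Iδ - Blow = (1/((k:ℝ)*c*(m:ℝ)))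
      * (((a : ℝ) * (4 * (k : ℝ) - 4) * Real.logb 2 (4 * (k : ℝ) - 4) +
          ((r : ℝ) + 1) * c * Real.logb 2 (((r : ℝ) + 1) * c) +
          ((n : ℝ) - (a : ℝ) - 1) * c * Real.logb 2 c) - T) := by
    rw [hI, hBlow]; ring
  have hIBH : Iδ - Bhigh = (1/((k:ℝ)*c*(m:ℝ)))
      * ((((m : ℝ) - 1) * (2 * (k : ℝ) - 2) * Real.logb 2 (2 * (k : ℝ) - 2) +
          ((n : ℝ) - (m : ℝ) + 1) * c * Real.logb 2 c) - T) := by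
    rw [hI, hBhigh]; ring
  have hlowle : Blow ≤ Iδ := by
    nlinarith only [hIBL, mul_nonneg h1S.le (by linarith only [hUB] :
      (0:ℝ) ≤ ((a : ℝ) * (4 * (k : ℝ) - 4) * Real.logb 2 (4 * (k : ℝ) - 4) +
          ((r : ℝ) + 1) * c * Real.logb 2 (((r : ℝ) + 1) * c) +
          ((n : ℝ) - (a : ℝ) - 1) * c * Real.logb 2 c) - T)]
  have hhighle : Iδ ≤ Bhigh := by
    nlinarith only [hIBH, mul_nonpos_of_nonneg_of_nonpos h1S.le (by linarith only [hHB] :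
      (((m : ℝ) - 1) * (2 * (k : ℝ) - 2) * Real.logb 2 (2 * (k : ℝ) - 2) +
          ((n : ℝ) - (m : ℝ) + 1) * c * Real.logb 2 c) - T ≤ 0)]
  have hIeqBL : Iδ = Blow ↔ T = ((a : ℝ) * (4 * (k : ℝ) - 4) * Real.logb 2 (4 * (k : ℝ) - 4) +
          ((r : ℝ) + 1) * c * Real.logb 2 (((r : ℝ) + 1) * c) +
          ((n : ℝ) - (a : ℝ) - 1) * c * Real.logb 2 c) := by
    constructor
    · intro h
      have h0 : (1/((k:ℝ)*c*(m:ℝ))) * (((a : ℝ) * (4 * (k : ℝ) - 4) * Real.logb 2 (4 * (k : ℝ) - 4) +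
          ((r : ℝ) + 1) * c * Real.logb 2 (((r : ℝ) + 1) * c) +
          ((n : ℝ) - (a : ℝ) - 1) * c * Real.logb 2 c) - T) = 0 := by
        rw [← hIBL, h]; ring
      rcases mul_eq_zero.1 h0 with h' | h'
      · exact absurd h' (ne_of_gt h1S)
      · linarith only [h']
    · intro h
      rw [← h] at hIBL
      simp at hIBL
      linarith only [hIBL]
  have hIeqBH : Iδ = Bhigh ↔ T = (((m : ℝ) - 1) * (2 * (k : ℝ) - 2) * Real.logb 2 (2 * (k : ℝ) - 2) +
          ((n : ℝ) - (m : ℝ) + 1) * c * Real.logb 2 c) := by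
    constructor
    · intro h
      have h0 : (1/((k:ℝ)*c*(m:ℝ))) * ((((m : ℝ) - 1) * (2 * (k : ℝ) - 2) * Real.logb 2 (2 * (k : ℝ) - 2) +
          ((n : ℝ) - (m : ℝ) + 1) * c * Real.logb 2 c) - T) = 0 := by
        rw [← hIBH, h]; ring
      rcases mul_eq_zero.1 h0 with h' | h'
      · exact absurd h' (ne_of_gt h1S)
      · linarith only [h']
    · intro h
      rw [← h] at hIBH
      simp at hIBH
      linarith only [hIBH]
  refine ⟨⟨hlowle, hhighle⟩, ?_, ?_⟩
  · rw [hIeqBL, hUeq, hN2, hN3, hN4]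
    exact (counts_tlow hr han d hd).symm
  · rw [hIeqBH, hHeq]
    have hmid : (N3 = 0 ∧ N4 = 0) ↔ (N2 = m - 1 ∧ N3 = 0 ∧ N4 = 0) := by
      constructor
      · rintro ⟨h3, h4⟩; exact ⟨by omega, h3, h4⟩
      · rintro ⟨_, h3, h4⟩; exact ⟨h3, h4⟩
    rw [hmid, hN2, hN3, hN4]
    exact (counts_thigh hbn d hd).symm
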